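/- The decomposition (U*, v*, ω*) = (U, v, ω) + (ρ⁻¹∇p, −m⁻¹∫_Γ p n dS, −𝕀⁻¹∫_Γ p J dS) is orthogonal with respect to the energy inner product ⟨(U₁,v₁,ω₁),(U₂,v₂,ω₂)⟩_E = ∫_Ω ½ρ U₁·U₂ dx + ½m v₁·v₂ + ½ω₁·𝕀ω₂, provided (U,v,ω) satisfies ∇·U = 0 in Ω, U·n = v·n + ω·J on Γ, and U·n = 0 on Γ'. -/

import Mathlib

open MeasureTheory Matrix

/-- Cross product of vectors in `ℝ³`. -/
def cross3 (u v : Fin 3 → ℝ) : Fin 3 → ℝ :=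
  ![u 1 * v 2 - u 2 * v 1, u 2 * v 0 - u 0 * v 2, u 0 * v 1 - u 1 * v 0]

/-- Gradient of a scalar field on `ℝ³`. -/
noncomputable def grad3 (p : (Fin 3 → ℝ) → ℝ) (x : Fin 3 → ℝ) : Fin 3 → ℝ :=
  fun i => fderiv ℝ p x (Pi.single i 1)

/-- Trace of an endomorphism of `ℝ³` as a sum of diagonal entries. -/
lemma trace_eq_sum_single (T : (Fin 3 → ℝ) →ₗ[ℝ] (Fin 3 → ℝ)) :
    LinearMap.trace ℝ (Fin 3 → ℝ) T = ∑ i, T (Pi.single i 1) i := by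
  rw [LinearMap.trace_eq_matrix_trace ℝ (Pi.basisFun ℝ (Fin 3)) T]
  simp [Matrix.trace, LinearMap.toMatrix_apply, Matrix.diag]

/-- Dot product with a fixed vector, as a continuous linear map. -/
noncomputable def dotCLM (w : Fin 3 → ℝ) : (Fin 3 → ℝ) →L[ℝ] ℝ :=
  ∑ i, w i • (ContinuousLinearMap.proj i : (Fin 3 → ℝ) →L[ℝ] ℝ)

lemma dotCLM_apply (w u : Fin 3 → ℝ) : dotCLM w u = w ⬝ᵥ u := by
  simp [dotCLM, dotProduct, ContinuousLinearMap.sum_apply]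

/-- The decomposition
`(U*, v*, ω*) = (U, v, ω) + (ρ⁻¹∇p, −m⁻¹∫_Γ p n dS, −𝕀⁻¹∫_Γ p J dS)` is orthogonal with
respect to the energy inner product
`⟨(U₁,v₁,ω₁),(U₂,v₂,ω₂)⟩_E = ∫_Ω ½ρ U₁·U₂ dx + ½m v₁·v₂ + ½ω₁·𝕀ω₂`,
provided `(U,v,ω)` satisfies `∇·U = 0` in `Ω`, `U·n = v·n + ω·J` on `Γ`,
and `U·n = 0` on `Γ'`, where `J(x) = (x−c) × n(x)`. -/
theorem augmented_hodge_decomposition_orthogonal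
    (Ω : Set (Fin 3 → ℝ)) (hopen : IsOpen Ω) (hbd : Bornology.IsBounded Ω)
    (Γ Γ' : Set (Fin 3 → ℝ)) (hdisj : Disjoint Γ Γ') (hbdry : Γ ∪ Γ' = frontier Ω)
    (σ : Measure (Fin 3 → ℝ)) (hσfin : σ (Γ ∪ Γ') ≠ ⊤)
    (n : (Fin 3 → ℝ) → (Fin 3 → ℝ)) (hunit : ∀ x ∈ Γ ∪ Γ', ∑ i, n x i ^ 2 = 1)
    (ρ m : ℝ) (hρ : 0 < ρ) (hm : 0 < m)
    (𝕀 : Matrix (Fin 3) (Fin 3) ℝ) (h𝕀 : 𝕀.PosDef)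
    (c : Fin 3 → ℝ) (v ω : Fin 3 → ℝ)
    (U : (Fin 3 → ℝ) → (Fin 3 → ℝ)) (p : (Fin 3 → ℝ) → ℝ)
    (hU : ContDiff ℝ 1 U) (hp : ContDiff ℝ 1 p)
    (hdivfree : ∀ x ∈ Ω,
      LinearMap.trace ℝ (Fin 3 → ℝ) (fderiv ℝ U x : (Fin 3 → ℝ) →ₗ[ℝ] (Fin 3 → ℝ)) = 0)
    (hbcΓ : ∀ x ∈ Γ, U x ⬝ᵥ n x = v ⬝ᵥ n x + ω ⬝ᵥ cross3 (x - c) (n x))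
    (hbcΓ' : ∀ x ∈ Γ', U x ⬝ᵥ n x = 0)
    (hint1 : IntegrableOn (fun x => U x ⬝ᵥ grad3 p x) Ω)
    (hint2 : IntegrableOn (fun x => p x • n x) Γ σ)
    (hint3 : IntegrableOn (fun x => p x • cross3 (x - c) (n x)) Γ σ)
    (hdiv : ∀ F : (Fin 3 → ℝ) → (Fin 3 → ℝ), ContDiff ℝ 1 F →
      ∫ x in Ω, LinearMap.trace ℝ (Fin 3 → ℝ) (fderiv ℝ F x : (Fin 3 → ℝ) →ₗ[ℝ] (Fin 3 → ℝ))
        = ∫ x in Γ ∪ Γ', F x ⬝ᵥ n x ∂σ) :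
    (∫ x in Ω, (1 / 2) * ρ * (U x ⬝ᵥ ((1 / ρ) • grad3 p x)))
      + (1 / 2) * m * (v ⬝ᵥ (-(1 / m) • (∫ x in Γ, p x • n x ∂σ)))
      + (1 / 2) * (ω ⬝ᵥ (𝕀 *ᵥ (-(𝕀⁻¹ *ᵥ (∫ x in Γ, p x • cross3 (x - c) (n x) ∂σ)))))
      = 0 := by
  classical
  set A : Set (Fin 3 → ℝ) := Γ ∪ Γ' with hAdef
  have hAmeas : MeasurableSet A := by
    rw [hbdry]; exact isClosed_frontier.measurableSet
  have hΓA : Γ ⊆ A := Set.subset_union_left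
  have hσΓ : σ Γ ≠ ⊤ := by
    intro h
    exact hσfin (top_unique (h ▸ measure_mono Set.subset_union_left))
  set T : Set (Fin 3 → ℝ) := toMeasurable σ Γ with hTdef
  set E : Set (Fin 3 → ℝ) := T ∩ A with hEdef
  have hTmeas : MeasurableSet T := measurableSet_toMeasurable σ Γ
  have hEmeas : MeasurableSet E := hTmeas.inter hAmeas
  have hΓT : Γ ⊆ T := subset_toMeasurable σ Γ
  have hΓE : Γ ⊆ E := Set.subset_inter hΓT hΓA
  have hEA : E ⊆ A := Set.inter_subset_right
  -- the measurable hull of Γ inside A carries the same restricted measure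
  have hTA0 : σ (T \ A) = 0 := by
    have h1 : σ (T ∩ Aᶜ) = σ (Γ ∩ Aᶜ) := Measure.measure_toMeasurable_inter hAmeas.compl hσΓ
    have h2 : Γ ∩ Aᶜ = (∅ : Set (Fin 3 → ℝ)) := by
      rw [← Set.diff_eq, Set.diff_eq_empty]; exact hΓA
    rw [Set.diff_eq, h1, h2, measure_empty]
  have hrestrict : σ.restrict Γ = σ.restrict E := by
    rw [← Measure.restrict_toMeasurable hσΓ]
    refine Measure.restrict_congr_set ?_
    refine (MeasureTheory.ae_eq_set.2 ⟨?_, ?_⟩)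
    · have h1 : T \ E = T \ A := by rw [hEdef, Set.diff_self_inter]
      rw [h1]; exact hTA0
    · have h1 : E \ T = ∅ := Set.diff_eq_empty.2 Set.inter_subset_left
      rw [h1, measure_empty]
  have hint2' : Integrable (fun x => p x • n x) (σ.restrict E) := by
    rw [← hrestrict]; exact hint2
  have hint3' : Integrable (fun x => p x • cross3 (x - c) (n x)) (σ.restrict E) := by
    rw [← hrestrict]; exact hint3
  set f : (Fin 3 → ℝ) → ℝ := fun x => U x ⬝ᵥ (p x • n x) with hfdef
  set g : (Fin 3 → ℝ) → ℝ :=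
    fun x => v ⬝ᵥ (p x • n x) + ω ⬝ᵥ (p x • cross3 (x - c) (n x)) with hgdef
  have hfg : ∀ x ∈ Γ, f x = g x := by
    intro x hx
    simp only [hfdef, hgdef, dotProduct_smul, smul_eq_mul]
    rw [hbcΓ x hx]; ring
  have hf0 : ∀ x ∈ Γ', f x = 0 := by
    intro x hx
    simp only [hfdef, dotProduct_smul, smul_eq_mul, hbcΓ' x hx, mul_zero]
  -- step 1 : divergence theorem applied to `p • U`
  have hd1 := hdiv (fun x => p x • U x) (hp.smul hU)
  have hA1 : (∫ x in Ω, LinearMap.trace ℝ (Fin 3 → ℝ)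
        (fderiv ℝ (fun x => p x • U x) x : (Fin 3 → ℝ) →ₗ[ℝ] (Fin 3 → ℝ)))
      = ∫ x in Ω, U x ⬝ᵥ grad3 p x := by
    refine setIntegral_congr_fun hopen.measurableSet fun x hx => ?_
    have hdp : DifferentiableAt ℝ p x := (hp.differentiable one_ne_zero).differentiableAt
    have hdU : DifferentiableAt ℝ U x := (hU.differentiable one_ne_zero).differentiableAt
    rw [fderiv_fun_smul hdp hdU]
    have hco : ((p x • fderiv ℝ U x + (fderiv ℝ p x).smulRight (U x) :
        (Fin 3 → ℝ) →L[ℝ] (Fin 3 → ℝ)) : (Fin 3 → ℝ) →ₗ[ℝ] (Fin 3 → ℝ))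
        = p x • (fderiv ℝ U x : (Fin 3 → ℝ) →ₗ[ℝ] (Fin 3 → ℝ))
          + (((fderiv ℝ p x).smulRight (U x) : (Fin 3 → ℝ) →L[ℝ] (Fin 3 → ℝ)) :
            (Fin 3 → ℝ) →ₗ[ℝ] (Fin 3 → ℝ)) := rfl
    rw [hco, map_add, LinearMap.map_smul, hdivfree x hx, trace_eq_sum_single]
    simp [ContinuousLinearMap.smulRight_apply, dotProduct, grad3, mul_comm]
  have hA2 : (∫ x in A, (fun x => p x • U x) x ⬝ᵥ n x ∂σ) = ∫ x in A, f x ∂σ := by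
    refine setIntegral_congr_fun hAmeas fun x _ => ?_
    simp only [hfdef, smul_dotProduct, dotProduct_smul]
  -- step 2 : drop the part of A outside E, where f vanishes
  have hsplit : (∫ x in A, f x ∂σ) = ∫ x in E, f x ∂σ := by
    have h1 : Set.EqOn f (E.indicator f) A := by
      intro x hx
      by_cases hxE : x ∈ E
      · simp [Set.indicator_of_mem hxE]
      · have hxΓ' : x ∈ Γ' := by
          rcases hx with h | h
          · exact absurd (hΓE h) hxE
          · exact h
        simp [Set.indicator_of_notMem hxE, hf0 x hxΓ']
    rw [setIntegral_congr_fun hAmeas h1, setIntegral_indicator hEmeas,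
      Set.inter_eq_self_of_subset_right hEA]
  -- step 3 : f = g almost everywhere on E
  have hfm : AEStronglyMeasurable f (σ.restrict E) := by
    have h1 : AEMeasurable (fun x => p x • n x) (σ.restrict E) := hint2'.1.aemeasurable
    have h2 : AEMeasurable f (σ.restrict E) := by
      simp only [hfdef, dotProduct]
      exact Finset.aemeasurable_fun_sum _ fun i _ =>
        (((continuous_apply i).comp hU.continuous).measurable.aemeasurable).mul
          ((measurable_pi_apply i).comp_aemeasurable h1)
    exact h2.aestronglyMeasurable
  have hgv : Integrable (fun x => v ⬝ᵥ (p x • n x)) (σ.restrict E) := by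
    simpa [dotCLM_apply] using (dotCLM v).integrable_comp hint2'
  have hgω : Integrable (fun x => ω ⬝ᵥ (p x • cross3 (x - c) (n x))) (σ.restrict E) := by
    simpa [dotCLM_apply] using (dotCLM ω).integrable_comp hint3'
  have hgint : Integrable g (σ.restrict E) := hgv.add hgω
  have hae : f =ᵐ[σ.restrict E] g := by
    have hsub : AEStronglyMeasurable (fun x => f x - g x) (σ.restrict E) := hfm.sub hgint.1
    set h' := hsub.mk _ with hh'
    have hmeas' : StronglyMeasurable h' := hsub.stronglyMeasurable_mk
    have heq : ∀ᵐ x ∂(σ.restrict E), f x - g x = h' x := hsub.ae_eq_mk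
    set N : Set (Fin 3 → ℝ) := {x | ¬ (f x - g x = h' x)} with hNdef
    have hNnull : σ.restrict E N = 0 := heq
    set P : Set (Fin 3 → ℝ) := {x | h' x ≠ 0} with hPdef
    have hPmeas : MeasurableSet P :=
      hmeas'.measurable (measurableSet_singleton (0 : ℝ)).compl
    have hΓP : Γ ∩ P ⊆ N := by
      rintro x ⟨hxΓ, hxP⟩
      intro hEq
      exact hxP (by rw [← hEq, hfg x hxΓ, sub_self])
    have hΓP0 : σ (Γ ∩ P) = 0 := by
      have h1 : σ.restrict E (Γ ∩ P) = 0 := measure_mono_null hΓP hNnull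
      rwa [Measure.restrict_apply' hEmeas,
        Set.inter_eq_self_of_subset_left (fun x hx => hΓE hx.1)] at h1
    have hP0 : σ.restrict E P = 0 := by
      rw [Measure.restrict_apply' hEmeas]
      have e1 : P ∩ E = T ∩ (A ∩ P) := by
        ext x
        constructor
        · rintro ⟨h1, h2, h3⟩; exact ⟨h2, h3, h1⟩
        · rintro ⟨h1, h2, h3⟩; exact ⟨h3, h1, h2⟩
      rw [e1, hTdef, Measure.measure_toMeasurable_inter (hAmeas.inter hPmeas) hσΓ]
      have e2 : Γ ∩ (A ∩ P) = Γ ∩ P := by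
        ext x
        constructor
        · rintro ⟨h1, _, h3⟩; exact ⟨h1, h3⟩
        · rintro ⟨h1, h3⟩; exact ⟨h1, hΓA h1, h3⟩
      rw [e2]; exact hΓP0
    have hDsub : {x | ¬ f x = g x} ⊆ P ∪ N := by
      intro x hx
      by_cases hN' : f x - g x = h' x
      · left
        intro h0
        exact hx (by have := hN' ▸ h0; exact sub_eq_zero.mp (hN'.trans h0))
      · right; exact hN'
    exact measure_mono_null hDsub (measure_union_null hP0 hNnull)
  have hEfg : (∫ x in E, f x ∂σ) = ∫ x in E, g x ∂σ := integral_congr_ae hae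
  -- step 4 : the integral of g over E is the right-hand side of the goal
  have hI2 : v ⬝ᵥ (∫ x in Γ, p x • n x ∂σ) = ∫ x in E, v ⬝ᵥ (p x • n x) ∂σ := by
    rw [hrestrict, ← dotCLM_apply,
      ← ContinuousLinearMap.integral_comp_comm (dotCLM v) hint2']
    simp [dotCLM_apply]
  have hI3 : ω ⬝ᵥ (∫ x in Γ, p x • cross3 (x - c) (n x) ∂σ)
      = ∫ x in E, ω ⬝ᵥ (p x • cross3 (x - c) (n x)) ∂σ := by
    rw [hrestrict, ← dotCLM_apply,
      ← ContinuousLinearMap.integral_comp_comm (dotCLM ω) hint3']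
    simp [dotCLM_apply]
  have hgsum : (∫ x in E, g x ∂σ)
      = (∫ x in E, v ⬝ᵥ (p x • n x) ∂σ)
        + ∫ x in E, ω ⬝ᵥ (p x • cross3 (x - c) (n x)) ∂σ := integral_add hgv hgω
  -- the key identity
  have key : (∫ x in Ω, U x ⬝ᵥ grad3 p x)
      = v ⬝ᵥ (∫ x in Γ, p x • n x ∂σ)
        + ω ⬝ᵥ (∫ x in Γ, p x • cross3 (x - c) (n x) ∂σ) := by
    rw [hI2, hI3, ← hgsum, ← hEfg, ← hsplit, ← hA2, ← hA1]
    exact hd1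
  -- finish : algebraic manipulation of the goal
  have hgoal1 : ∀ x, (1 / 2 : ℝ) * ρ * (U x ⬝ᵥ ((1 / ρ) • grad3 p x))
      = (1 / 2) * (U x ⬝ᵥ grad3 p x) := by
    intro x
    rw [dotProduct_smul, smul_eq_mul]
    field_simp
  have hdet : IsUnit 𝕀.det := isUnit_iff_ne_zero.mpr (ne_of_gt h𝕀.det_pos)
  simp_rw [hgoal1]
  rw [MeasureTheory.integral_const_mul, key]
  simp only [neg_smul, dotProduct_neg, dotProduct_smul, smul_eq_mul, Matrix.mulVec_neg,
    Matrix.mulVec_mulVec, Matrix.mul_nonsing_inv _ hdet, Matrix.one_mulVec]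
  field_simp
  ring
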